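/- For n ≥ 1, the function g_n(t) = ∑_{k=1}^n (1 − k/n)(1/k) sin(kt) satisfies sup_t |g_n(t)| ≤ 2π. -/

import Mathlib

open Real Complex

/-- `g_n(t) = ∑_{k=1}^n (1 - k/n)(1/k) sin(kt)` (real valued). -/
noncomputable def gFun (n : ℕ) (t : ℝ) : ℝ :=
  ∑ k ∈ Finset.Icc 1 n, (1 - (k : ℝ) / n) * (1 / k) * Real.sin (k * t)

noncomputable def hFun (n : ℕ) (t : ℝ) : ℝ :=
  ∑ k ∈ Finset.Icc 1 n, (1 - (k : ℝ) / n) * Real.cos (k * t)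

noncomputable def fejer (n : ℕ) (t : ℝ) : ℝ :=
  ((∑ j ∈ Finset.range n, Real.cos (j * t))^2 +
   (∑ j ∈ Finset.range n, Real.sin (j * t))^2) / n

lemma hFun_cont (n : ℕ) : Continuous (hFun n) := by
  unfold hFun; fun_prop

lemma fejer_cont (n : ℕ) : Continuous (fejer n) := by
  unfold fejer; fun_prop

lemma fejer_nonneg (n : ℕ) (t : ℝ) : 0 ≤ fejer n t := by
  unfold fejer
  positivity

lemma sq_identity (n : ℕ) (t : ℝ) :
    (∑ j ∈ Finset.range n, Real.cos (j * t))^2 +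
      (∑ j ∈ Finset.range n, Real.sin (j * t))^2
    = n + 2 * ∑ k ∈ Finset.Icc 1 n, ((n : ℝ) - k) * Real.cos (k * t) := by
  induction n with
  | zero => simp
  | succ n ih =>
    have cross : (∑ j ∈ Finset.range n, Real.cos (j * t)) * Real.cos (n * t)
        + (∑ j ∈ Finset.range n, Real.sin (j * t)) * Real.sin (n * t)
        = ∑ k ∈ Finset.Icc 1 n, Real.cos (k * t) := by
      rw [Finset.sum_mul, Finset.sum_mul, ← Finset.sum_add_distrib]
      have : ∀ j ∈ Finset.range n,
          Real.cos (j * t) * Real.cos (n * t) + Real.sin (j * t) * Real.sin (n * t)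
          = Real.cos (((n : ℝ) - j) * t) := by
        intro j _
        rw [show ((n : ℝ) - j) * t = (n : ℝ) * t - j * t by ring, Real.cos_sub]
        ring
      rw [Finset.sum_congr rfl this]
      have h1 : ∑ k ∈ Finset.Icc 1 n, Real.cos (k * t)
          = ∑ j ∈ Finset.range n, Real.cos ((1 + j : ℕ) * t) := by
        rw [← Finset.Ico_add_one_right_eq_Icc, Finset.sum_Ico_eq_sum_range]
        simp
      rw [h1]
      rw [← Finset.sum_range_reflect (fun j => Real.cos ((1 + j : ℕ) * t)) n]
      apply Finset.sum_congr rfl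
      intro j hj
      have hj' : j < n := Finset.mem_range.mp hj
      congr 1
      have : (1 + (n - 1 - j) : ℕ) = n - j := by omega
      rw [this]
      have : ((n - j : ℕ) : ℝ) = (n : ℝ) - j := by
        have : j ≤ n := hj'.le
        push_cast [Nat.cast_sub this]
        ring
      rw [this]
    have sumstep : ∑ k ∈ Finset.Icc 1 (n + 1), (((n : ℝ) + 1) - k) * Real.cos (k * t)
        = ∑ k ∈ Finset.Icc 1 n, ((n : ℝ) - k) * Real.cos (k * t)
          + ∑ k ∈ Finset.Icc 1 n, Real.cos (k * t) := by
      rw [Finset.sum_Icc_succ_top (by omega : 1 ≤ n + 1)]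
      rw [Finset.sum_congr rfl (fun k _ => by ring :
        ∀ k ∈ Finset.Icc 1 n, (((n : ℝ) + 1) - k) * Real.cos (k * t)
          = ((n : ℝ) - k) * Real.cos (k * t) + Real.cos (k * t))]
      rw [Finset.sum_add_distrib]
      push_cast
      ring
    rw [Finset.sum_range_succ, Finset.sum_range_succ, add_sq, add_sq]
    push_cast
    rw [sumstep]
    nlinarith [ih, cross, Real.sin_sq_add_cos_sq (n * t)]

lemma hFun_eq (n : ℕ) (hn : 1 ≤ n) (t : ℝ) : hFun n t = (fejer n t - 1) / 2 := by
  have hn' : (n : ℝ) ≠ 0 := by positivity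
  unfold hFun fejer
  rw [sq_identity n t]
  rw [Finset.sum_congr rfl (fun k _ => by field_simp :
    ∀ k ∈ Finset.Icc 1 n, (1 - (k : ℝ) / n) * Real.cos (k * t)
      = (((n : ℝ) - k) * Real.cos (k * t)) / n)]
  rw [← Finset.sum_div]
  field_simp
  ring_nf
  simp only [mul_comm t]

lemma gFun_hasDerivAt (n : ℕ) (t : ℝ) : HasDerivAt (gFun n) (hFun n t) t := by
  unfold gFun hFun
  apply HasDerivAt.fun_sum
  intro k hk
  have hk1 : 1 ≤ k := (Finset.mem_Icc.mp hk).1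
  have hkne : (k : ℝ) ≠ 0 := by positivity
  have h1 : HasDerivAt (fun t : ℝ => Real.sin (k * t)) (Real.cos (k * t) * k) t := by
    simpa [Function.comp_def] using (Real.hasDerivAt_sin ((k : ℝ) * t)).comp t ((hasDerivAt_id t).const_mul (k : ℝ))
  have := h1.const_mul ((1 - (k : ℝ) / n) * (1 / k))
  convert this using 1
  · rfl
  field_simp

lemma gFun_eq_integral (n : ℕ) (t : ℝ) :
    gFun n t = ∫ s in (0:ℝ)..t, hFun n s := by
  have := intervalIntegral.integral_eq_sub_of_hasDerivAt
    (f := gFun n) (f' := hFun n) (a := 0) (b := t)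
    (fun s _ => gFun_hasDerivAt n s)
    ((hFun_cont n).intervalIntegrable 0 t)
  rw [this]
  simp [gFun]

lemma gFun_two_pi (n : ℕ) : gFun n (2 * Real.pi) = 0 := by
  unfold gFun
  apply Finset.sum_eq_zero
  intro k _
  have h2 : (k : ℝ) * (2 * Real.pi) = ((2 * k : ℕ) : ℝ) * Real.pi := by push_cast; ring
  rw [h2, Real.sin_nat_mul_pi]
  simp

lemma fejer_integral (n : ℕ) (hn : 1 ≤ n) :
    ∫ s in (0:ℝ)..(2 * Real.pi), fejer n s = 2 * Real.pi := by
  have key : ∀ s, fejer n s = 2 * hFun n s + 1 := by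
    intro s; rw [hFun_eq n hn s]; ring
  rw [intervalIntegral.integral_congr (g := fun s => 2 * hFun n s + 1) (fun s _ => key s)]
  rw [intervalIntegral.integral_add (f := fun s => 2 * hFun n s) ((continuous_const.mul (hFun_cont n)).intervalIntegrable _ _)
    (intervalIntegrable_const)]
  rw [intervalIntegral.integral_const_mul, ← gFun_eq_integral, gFun_two_pi]
  simp

lemma gFun_bound_Icc (n : ℕ) (hn : 1 ≤ n) (t : ℝ) (ht0 : 0 ≤ t) (ht : t ≤ 2 * Real.pi) :
    |gFun n t| ≤ 2 * Real.pi := by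
  rw [gFun_eq_integral]
  calc |∫ s in (0:ℝ)..t, hFun n s|
      ≤ ∫ s in (0:ℝ)..t, (fejer n s + 1) / 2 := by
        apply intervalIntegral.abs_integral_le_integral_abs ht0 |>.trans
        apply intervalIntegral.integral_mono_on ht0
          ((hFun_cont n).abs.intervalIntegrable _ _)
          (((fejer_cont n).add continuous_const).div_const 2 |>.intervalIntegrable _ _)
        intro s _
        rw [hFun_eq n hn, abs_div, abs_of_pos (by norm_num : (0:ℝ) < 2)]
        have h0 := fejer_nonneg n s
        have h1 : |fejer n s - 1| ≤ fejer n s + 1 := by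
          rw [abs_le]; constructor <;> linarith
        simp only [Pi.add_apply]
        linarith
    _ ≤ ∫ s in (0:ℝ)..(2 * Real.pi), (fejer n s + 1) / 2 := by
        apply intervalIntegral.integral_mono_interval (le_refl (0:ℝ)) ht0 ht
        · filter_upwards with s
          have := fejer_nonneg n s
          positivity
        · exact (((fejer_cont n).add continuous_const).div_const 2).intervalIntegrable _ _
    _ = 2 * Real.pi := by
        rw [intervalIntegral.integral_div, intervalIntegral.integral_add
          ((fejer_cont n).intervalIntegrable _ _) intervalIntegrable_const,
          fejer_integral n hn]
        simp

lemma gFun_periodic (n : ℕ) : Function.Periodic (gFun n) (2 * Real.pi) := by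
  intro t
  unfold gFun
  apply Finset.sum_congr rfl
  intro k _
  congr 1
  have : (k : ℝ) * (t + 2 * Real.pi) = k * t + k * (2 * Real.pi) := by ring
  rw [this, Real.sin_add_nat_mul_two_pi]

theorem gFun_sup_bound (n : ℕ) (hn : 1 ≤ n) : ∀ t : ℝ, |gFun n t| ≤ 2 * Real.pi := by
  intro t
  obtain ⟨y, hy, hfy⟩ := (gFun_periodic n).exists_mem_Ico₀ Real.two_pi_pos t
  rw [hfy]
  exact gFun_bound_Icc n hn y hy.1 hy.2.le
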